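/- Let p(μ, Σ; x) denote the density of a multivariate normal with mean μ and covariance Σ evaluated at x. Let Σ_E, Ω be positive definite, and A, B matrices with B^T Ω^{-1} B invertible. Define Ω̄ = (B^T Ω^{-1} B)^{-1}, Ā = -Ω̄ B^T Ω^{-1} A, b̄ = -Ω̄ B^T Ω^{-1} c, Θ̄ = (Σ_E^{-1} - Ā^T Ω̄^{-1} Ā + A^T Ω^{-1} A)^{-1}, R̄ = Θ̄ Σ_E^{-1}, s̄ = Θ̄(Ā^T Ω̄^{-1} b̄ - A^T Ω^{-1} c). Then p(β, Σ_E; b̂) · exp(-½(Ab̂ + Bγ̂ + c)^T Ω^{-1} (Ab̂ + Bγ̂ + c)) = K(β) · p(R̄β + s̄, Θ̄; b̂) · p(Āb̂ + b̄, Ω̄; γ̂), where K(β) depends only on β (not on b̂ or γ̂). -/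

import Mathlib

open Matrix

/-- Multivariate normal density with mean `μ` and covariance `S`, evaluated at `x`. -/
noncomputable def gaussDensity {d : ℕ} (μ : Fin d → ℝ) (S : Matrix (Fin d) (Fin d) ℝ)
    (x : Fin d → ℝ) : ℝ :=
  (1 / Real.sqrt ((2 * Real.pi) ^ d * S.det)) *
    Real.exp (-(1 / 2) * ((x - μ) ⬝ᵥ (S⁻¹ *ᵥ (x - μ))))

lemma gauss_pos {d : ℕ} (μ : Fin d → ℝ) (S : Matrix (Fin d) (Fin d) ℝ) (x : Fin d → ℝ)
    (hS : 0 < S.det) : 0 < gaussDensity μ S x := by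
  unfold gaussDensity; positivity

lemma ratio (sS sT sO EA EW EA0 EW0 ET0 EO0 ET1 EO1 : ℝ)
    (hsS : 0 < sS) (hsT : 0 < sT) (hsO : 0 < sO) (hET0 : 0 < ET0) (hEO0 : 0 < EO0)
    (hkey : EA * EW * ET0 * EO0 = EA0 * EW0 * ET1 * EO1) :
    1/sS * EA * EW =
      (1/sS * EA0 * EW0) / (1/sT * ET0 * (1/sO * EO0)) * (1/sT * ET1) * (1/sO * EO1) := by
  have h0 : sS ≠ 0 := hsS.ne'
  have h1 : sT ≠ 0 := hsT.ne'
  have h2 : sO ≠ 0 := hsO.ne'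
  have h3 : ET0 ≠ 0 := hET0.ne'
  have h4 : EO0 ≠ 0 := hEO0.ne'
  field_simp
  linear_combination hkey

lemma mv_dp {m n : ℕ} (M : Matrix (Fin m) (Fin n) ℝ) (x : Fin n → ℝ) (y : Fin m → ℝ) :
    (M *ᵥ x) ⬝ᵥ y = x ⬝ᵥ (Mᵀ *ᵥ y) := by
  rw [dotProduct_comm, dotProduct_mulVec, ← mulVec_transpose, dotProduct_comm]

lemma dp_flip {m n : ℕ} (x : Fin m → ℝ) (M : Matrix (Fin m) (Fin n) ℝ) (y : Fin n → ℝ) :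
    x ⬝ᵥ (M *ᵥ y) = y ⬝ᵥ (Mᵀ *ᵥ x) := by
  rw [dotProduct_mulVec, ← mulVec_transpose, dotProduct_comm]


lemma stmt5_aux (eN k q : ℕ)
    (SigE : Matrix (Fin eN) (Fin eN) ℝ) (Ω : Matrix (Fin q) (Fin q) ℝ)
    (A : Matrix (Fin q) (Fin eN) ℝ) (B : Matrix (Fin q) (Fin k) ℝ)
    (c : Fin q → ℝ)
    (hSig : SigE.PosDef) (hΩ : Ω.PosDef)
    (hB : IsUnit (Bᵀ * Ω⁻¹ * B).det)
    (Ωb : Matrix (Fin k) (Fin k) ℝ) (Ab : Matrix (Fin k) (Fin eN) ℝ) (bb : Fin k → ℝ)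
    (Θb : Matrix (Fin eN) (Fin eN) ℝ) (Rb : Matrix (Fin eN) (Fin eN) ℝ) (sb : Fin eN → ℝ)
    (eΩb : Ωb = (Bᵀ * Ω⁻¹ * B)⁻¹)
    (eAb : Ab = -(Ωb * Bᵀ * Ω⁻¹ * A))
    (ebb : bb = -((Ωb * Bᵀ * Ω⁻¹) *ᵥ c))
    (eΘb : Θb = (SigE⁻¹ - Abᵀ * Ωb⁻¹ * Ab + Aᵀ * Ω⁻¹ * A)⁻¹)
    (eRb : Rb = Θb * SigE⁻¹)
    (esb : sb = Θb *ᵥ (Abᵀ *ᵥ (Ωb⁻¹ *ᵥ bb) - Aᵀ *ᵥ (Ω⁻¹ *ᵥ c)))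
    (hΘ : Θb.PosDef) (hΩb : Ωb.PosDef) :
    ∃ K : (Fin eN → ℝ) → ℝ, ∀ (β bhat : Fin eN → ℝ) (γhat : Fin k → ℝ),
        gaussDensity β SigE bhat *
            Real.exp (-(1 / 2) *
              ((A *ᵥ bhat + B *ᵥ γhat + c) ⬝ᵥ (Ω⁻¹ *ᵥ (A *ᵥ bhat + B *ᵥ γhat + c)))) =
          K β * gaussDensity (Rb *ᵥ β + sb) Θb bhat *
            gaussDensity (Ab *ᵥ bhat + bb) Ωb γhat := by
  refine ⟨fun β => (gaussDensity β SigE 0 * Real.exp (-(1 / 2) * (c ⬝ᵥ (Ω⁻¹ *ᵥ c)))) /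
      (gaussDensity (Rb *ᵥ β + sb) Θb 0 * gaussDensity bb Ωb 0), fun β b γ => ?_⟩
  have key : (b - β) ⬝ᵥ (SigE⁻¹ *ᵥ (b - β)) +
      ((A *ᵥ b + B *ᵥ γ + c) ⬝ᵥ (Ω⁻¹ *ᵥ (A *ᵥ b + B *ᵥ γ + c))) +
      ((0 - (Rb *ᵥ β + sb)) ⬝ᵥ (Θb⁻¹ *ᵥ (0 - (Rb *ᵥ β + sb)))) +
      ((0 - bb) ⬝ᵥ (Ωb⁻¹ *ᵥ (0 - bb))) =
      ((0:Fin eN → ℝ) - β) ⬝ᵥ (SigE⁻¹ *ᵥ (0 - β)) + (c ⬝ᵥ (Ω⁻¹ *ᵥ c)) +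
      ((b - (Rb *ᵥ β + sb)) ⬝ᵥ (Θb⁻¹ *ᵥ (b - (Rb *ᵥ β + sb)))) +
      ((γ - (Ab *ᵥ b + bb)) ⬝ᵥ (Ωb⁻¹ *ᵥ (γ - (Ab *ᵥ b + bb)))) := by

    -- basic invertibility / symmetry facts
    have hΩdet : IsUnit Ω.det := isUnit_iff_ne_zero.mpr hΩ.det_pos.ne'
    have hΩbinv : Ωb⁻¹ = Bᵀ * Ω⁻¹ * B := by rw [eΩb, nonsing_inv_nonsing_inv _ hB]
    have hΩbu : Ωb⁻¹ * Ωb = 1 := by rw [hΩbinv, eΩb, mul_nonsing_inv _ hB]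
    have tSi : SigE⁻¹ᵀ = SigE⁻¹ := by simpa using hSig.isHermitian.inv.eq
    have tOi : Ω⁻¹ᵀ = Ω⁻¹ := by simpa using hΩ.isHermitian.inv.eq
    have tTb : Θbᵀ = Θb := by simpa using hΘ.isHermitian.eq
    have tWb : Ωbᵀ = Ωb := by simpa using hΩb.isHermitian.eq
    have tWbi : Ωb⁻¹ᵀ = Ωb⁻¹ := by simpa using hΩb.isHermitian.inv.eq
    set M : Matrix (Fin eN) (Fin eN) ℝ := SigE⁻¹ - Abᵀ * Ωb⁻¹ * Ab + Aᵀ * Ω⁻¹ * A with hMdef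
    have hMu : IsUnit M.det := by
      rw [← Matrix.isUnit_nonsing_inv_det_iff, ← eΘb]
      exact isUnit_iff_ne_zero.mpr hΘ.det_pos.ne'
    have hΘinv : Θb⁻¹ = M := by rw [eΘb, nonsing_inv_nonsing_inv _ hMu]
    have tM : Mᵀ = M := by
      rw [hMdef]
      simp [transpose_add, transpose_sub, transpose_mul, tSi, tOi, tWbi, Matrix.mul_assoc]
    have hMΘ : M * Θb = 1 := by rw [eΘb, mul_nonsing_inv _ hMu]
    -- the mean m1 as Θb *ᵥ u
    have hm1 : Rb *ᵥ β + sb =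
        Θb *ᵥ (SigE⁻¹ *ᵥ β + (Abᵀ *ᵥ (Ωb⁻¹ *ᵥ bb) - Aᵀ *ᵥ (Ω⁻¹ *ᵥ c))) := by
      rw [eRb, esb]; simp [mulVec_add, mulVec_mulVec]
    set u : Fin eN → ℝ := SigE⁻¹ *ᵥ β + (Abᵀ *ᵥ (Ωb⁻¹ *ᵥ bb) - Aᵀ *ᵥ (Ω⁻¹ *ᵥ c)) with hu
    rw [hm1, hΘinv]
    have hMm1 : M *ᵥ (Θb *ᵥ u) = u := by rw [mulVec_mulVec, hMΘ, one_mulVec]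
    have hΩbu' : Ωb * (Bᵀ * Ω⁻¹ * B) = 1 := by rw [eΩb, nonsing_inv_mul _ hB]
    have hsplit1 : ∀ z : Fin k → ℝ, Ωb *ᵥ (Bᵀ *ᵥ (Ω⁻¹ *ᵥ (B *ᵥ z))) = z := by
      intro z; simp only [mulVec_mulVec, ← Matrix.mul_assoc, hΩbu']
      exact one_mulVec z
    have hsplit2 : ∀ z : Fin k → ℝ, Bᵀ *ᵥ (Ω⁻¹ *ᵥ (B *ᵥ (Ωb *ᵥ z))) = z := by
      intro z; simp only [mulVec_mulVec, ← Matrix.mul_assoc, hΩbinv ▸ hΩbu]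
      exact one_mulVec z
    have hflip : (Θb *ᵥ u) ⬝ᵥ (M *ᵥ b) = b ⬝ᵥ u := by
      rw [dp_flip, tM, mulVec_mulVec, hMΘ, one_mulVec]
    simp only [zero_sub, sub_dotProduct, dotProduct_sub, add_dotProduct, dotProduct_add,
      mulVec_add, mulVec_sub, mulVec_neg, neg_mulVec, neg_dotProduct, dotProduct_neg,
      neg_neg, hMm1, hflip]
    simp only [hMdef, hu, hΩbinv, eAb, ebb, transpose_neg, transpose_mul,
      transpose_transpose, tOi, tWb,
      zero_sub, sub_dotProduct, dotProduct_sub, add_dotProduct, dotProduct_add,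
      add_mulVec, sub_mulVec, mulVec_add, mulVec_sub, mulVec_neg, neg_mulVec,
      neg_dotProduct, dotProduct_neg, neg_neg, neg_sub, ← mulVec_mulVec,
      hsplit1, hsplit2]
    simp only [mv_dp, transpose_transpose, tOi, tWb, tSi, tWbi, tTb, hsplit1, hsplit2]
    have o1 : β ⬝ᵥ SigE⁻¹ *ᵥ b = b ⬝ᵥ SigE⁻¹ *ᵥ β := by
      rw [dp_flip, tSi]
    have o2 : c ⬝ᵥ Ω⁻¹ *ᵥ A *ᵥ b = b ⬝ᵥ Aᵀ *ᵥ Ω⁻¹ *ᵥ c := by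
      simp only [mulVec_mulVec]; rw [dp_flip]
      simp only [transpose_mul, transpose_transpose, tOi, tSi, tWb, ← mulVec_mulVec]
    have o3 : c ⬝ᵥ Ω⁻¹ *ᵥ B *ᵥ γ = γ ⬝ᵥ Bᵀ *ᵥ Ω⁻¹ *ᵥ c := by
      simp only [mulVec_mulVec]; rw [dp_flip]
      simp only [transpose_mul, transpose_transpose, tOi, tSi, tWb, ← mulVec_mulVec]
    have o4 : b ⬝ᵥ Aᵀ *ᵥ Ω⁻¹ *ᵥ B *ᵥ γ = γ ⬝ᵥ Bᵀ *ᵥ Ω⁻¹ *ᵥ A *ᵥ b := by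
      simp only [mulVec_mulVec]; rw [dp_flip]
      simp only [transpose_mul, transpose_transpose, tOi, tSi, tWb, ← mulVec_mulVec]
    have o5 : c ⬝ᵥ Ω⁻¹ *ᵥ B *ᵥ Ωb *ᵥ Bᵀ *ᵥ Ω⁻¹ *ᵥ A *ᵥ b =
        b ⬝ᵥ Aᵀ *ᵥ Ω⁻¹ *ᵥ B *ᵥ Ωb *ᵥ Bᵀ *ᵥ Ω⁻¹ *ᵥ c := by
      simp only [mulVec_mulVec]; rw [dp_flip]
      simp only [transpose_mul, transpose_transpose, tOi, tSi, tWb, ← mulVec_mulVec,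
        Matrix.mul_assoc]
    simp only [o1, o2, o3, o4, o5]
    ring
  have key2 := congrArg (fun t => Real.exp (-(1/2) * t)) key
  simp only [mul_add, Real.exp_add] at key2
  have d1 := hSig.det_pos
  have d2 := hΘ.det_pos
  have d3 := hΩb.det_pos
  unfold gaussDensity
  exact ratio _ _ _ _ _ _ _ _ _ _ _ (by positivity) (by positivity) (by positivity)
    (Real.exp_pos _) (Real.exp_pos _) key2

/-- Exact factorization of the selection-informed Gaussian kernel:
`p(β,Σ_E;b̂)·exp(-½(Ab̂+Bγ̂+c)ᵀΩ⁻¹(Ab̂+Bγ̂+c)) = K(β)·p(R̄β+s̄,Θ̄;b̂)·p(Āb̂+b̄,Ω̄;γ̂)`. -/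
theorem stmt5 (eN k q : ℕ)
    (SigE : Matrix (Fin eN) (Fin eN) ℝ) (Ω : Matrix (Fin q) (Fin q) ℝ)
    (A : Matrix (Fin q) (Fin eN) ℝ) (B : Matrix (Fin q) (Fin k) ℝ)
    (c : Fin q → ℝ)
    (hSig : SigE.PosDef) (hΩ : Ω.PosDef)
    (hB : IsUnit (Bᵀ * Ω⁻¹ * B).det) :
    let Ωb := (Bᵀ * Ω⁻¹ * B)⁻¹
    let Ab := -(Ωb * Bᵀ * Ω⁻¹ * A)
    let bb := -((Ωb * Bᵀ * Ω⁻¹) *ᵥ c)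
    let Θb := (SigE⁻¹ - Abᵀ * Ωb⁻¹ * Ab + Aᵀ * Ω⁻¹ * A)⁻¹
    let Rb := Θb * SigE⁻¹
    let sb := Θb *ᵥ (Abᵀ *ᵥ (Ωb⁻¹ *ᵥ bb) - Aᵀ *ᵥ (Ω⁻¹ *ᵥ c))
    Θb.PosDef → Ωb.PosDef →
      ∃ K : (Fin eN → ℝ) → ℝ, ∀ (β bhat : Fin eN → ℝ) (γhat : Fin k → ℝ),
        gaussDensity β SigE bhat *
            Real.exp (-(1 / 2) *
              ((A *ᵥ bhat + B *ᵥ γhat + c) ⬝ᵥ (Ω⁻¹ *ᵥ (A *ᵥ bhat + B *ᵥ γhat + c)))) =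
          K β * gaussDensity (Rb *ᵥ β + sb) Θb bhat *
            gaussDensity (Ab *ᵥ bhat + bb) Ωb γhat := by
  intro Ωb Ab bb Θb Rb sb hΘ hΩb
  exact stmt5_aux eN k q SigE Ω A B c hSig hΩ hB Ωb Ab bb Θb Rb sb
    rfl rfl rfl rfl rfl rfl hΘ hΩb
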